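/- Let ψ ∈ Lip(1) and f ∈ Lip(1−δ) on [0,1] with 0 < δ < 1, and suppose at a point x̃ ∈ [0,1] maximizing x ↦ ψ(x) − f(x) − (δ/2)|x − x*| (for some fixed x*), we have ψ(x̃) − f(x̃) > s/2 for a given s > 0. Define h(x) := ψ(x̃) − f(x̃) + δ|x − x̃| + f(x) − s/2. Then h ∈ Lip(1), h(x̃) < ψ(x̃), and for all x ∈ [0,1] with |x − x̃| ≥ s/δ one has h(x) ≥ ψ(x); moreover ψ(x) − h(x) ≥ s/2 − 2|x − x̃| for all x ∈ [0,1]. -/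
import Mathlib


open Set

/-- Key local-perturbation construction: with `ψ ∈ Lip(1)`, `f ∈ Lip(1−δ)`,
a maximizer `xt` of `x ↦ ψ(x) − f(x) − (δ/2)|x − x*|` satisfying
`ψ(xt) − f(xt) > s/2`, the function
`h(x) = ψ(xt) − f(xt) + δ|x − xt| + f x − s/2` is 1-Lipschitz,
lies strictly below `ψ` at `xt`, dominates `ψ` for `|x − xt| ≥ s/δ`,
and satisfies `ψ(x) − h(x) ≥ s/2 − 2|x − xt|` on `[0,1]`. -/
theorem local_perturbation_construction
    (ψ f : ℝ → ℝ) (δ : ℝ) (hδ : 0 < δ ∧ δ < 1)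
    (hψ : LipschitzOnWith 1 ψ (Set.Icc (0:ℝ) 1))
    (hf : LipschitzOnWith (Real.toNNReal (1 - δ)) f (Set.Icc (0:ℝ) 1))
    (xstar : ℝ) (hxstar : xstar ∈ Set.Icc (0:ℝ) 1)
    (xt : ℝ) (hxt : xt ∈ Set.Icc (0:ℝ) 1)
    (hmax : ∀ x ∈ Set.Icc (0:ℝ) 1,
      ψ x - f x - (δ/2) * |x - xstar| ≤ ψ xt - f xt - (δ/2) * |xt - xstar|)
    (s : ℝ) (hs : 0 < s) (hgap : s / 2 < ψ xt - f xt)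
    (h : ℝ → ℝ)
    (hh : h = fun x => ψ xt - f xt + δ * |x - xt| + f x - s / 2) :
    LipschitzOnWith 1 h (Set.Icc (0:ℝ) 1) ∧
      h xt < ψ xt ∧
      (∀ x ∈ Set.Icc (0:ℝ) 1, s / δ ≤ |x - xt| → ψ x ≤ h x) ∧
      (∀ x ∈ Set.Icc (0:ℝ) 1, s / 2 - 2 * |x - xt| ≤ ψ x - h x) := by
  obtain ⟨hδ0, hδ1⟩ := hδ
  have hfd : ∀ x ∈ Set.Icc (0:ℝ) 1, ∀ y ∈ Set.Icc (0:ℝ) 1,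
      |f x - f y| ≤ (1 - δ) * |x - y| := by
    intro x hx y hy
    have := (lipschitzOnWith_iff_dist_le_mul.mp hf) x hx y hy
    rw [Real.dist_eq, Real.dist_eq] at this
    have hc : ((Real.toNNReal (1 - δ) : NNReal) : ℝ) = 1 - δ :=
      Real.coe_toNNReal _ (by linarith)
    rwa [hc] at this
  have hψd : ∀ x ∈ Set.Icc (0:ℝ) 1, ∀ y ∈ Set.Icc (0:ℝ) 1,
      |ψ x - ψ y| ≤ |x - y| := by
    intro x hx y hy
    have := (lipschitzOnWith_iff_dist_le_mul.mp hψ) x hx y hy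
    rw [Real.dist_eq, Real.dist_eq] at this
    simpa using this
  refine ⟨?_, ?_, ?_, ?_⟩
  · rw [lipschitzOnWith_iff_dist_le_mul]
    intro x hx y hy
    rw [Real.dist_eq, Real.dist_eq, hh]
    simp only
    have h1 := hfd x hx y hy
    have h2 : |(|x - xt| - |y - xt|)| ≤ |x - y| := by
      have := abs_abs_sub_abs_le_abs_sub (x - xt) (y - xt)
      simpa using this
    have h3 : δ * |x - xt| - δ * |y - xt| ≤ δ * |x - y| := by
      have := (abs_le.mp h2).2
      nlinarith
    have h4 : δ * |y - xt| - δ * |x - xt| ≤ δ * |x - y| := by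
      have := (abs_le.mp h2).1
      nlinarith
    have h5 := (abs_le.mp h1).1
    have h6 := (abs_le.mp h1).2
    push_cast
    rw [abs_le]
    constructor <;> nlinarith [abs_nonneg (x - y)]
  · rw [hh]; simp; linarith
  · intro x hx hfar
    have hm := hmax x hx
    have htri : |x - xstar| ≤ |xt - xstar| + |x - xt| := by
      have := abs_sub_abs_le_abs_sub (x - xstar) (xt - xstar)
      have h2 : |x - xstar - (xt - xstar)| = |x - xt| := by
        rw [show x - xstar - (xt - xstar) = x - xt by ring]
      rw [h2] at this; linarith
    have hkey : ψ x ≤ ψ xt - f xt + f x + (δ/2) * |x - xt| := by nlinarith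
    have hs2 : s / 2 ≤ (δ/2) * |x - xt| := by
      have := (div_le_iff₀ hδ0).mp hfar
      nlinarith
    rw [hh]; simp only; nlinarith
  · intro x hx
    have h1 := (abs_le.mp (hψd x hx xt hxt)).1
    have h2 := (abs_le.mp (hfd x hx xt hxt)).2
    rw [hh]; simp only; nlinarith
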